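/- Let g : ℝ^d × ℝ^p → ℝ be differentiable such that ∇_y g is L_g-Lipschitz in each variable (‖∇_y g(x, y₁) − ∇_y g(x, y₂)‖ ≤ L_g ‖y₁ − y₂‖ and ‖∇_y g(x₁, y) − ∇_y g(x₂, y)‖ ≤ L_g ‖x₁ − x₂‖), and suppose that for every x' ∈ ℝ^d the function g(x', ·) attains its infimum G(x') and satisfies the μ-PL condition ‖∇_y g(x', y)‖² ≥ 2μ (g(x', y) − G(x')) for all y, with μ > 0. Let B ∈ ℝ^{p×p} be symmetric with ρ_l I_p ⪯ B ⪯ ρ_u I_p where ρ_l, ρ_u > 0 and ρ_l ρ_u ≥ 1, let λ > 0, v ∈ ℝ^p, y ∈ ℝ^p, x, x' ∈ ℝ^d, and set y⁺ = y − λ B^{-1} v. Then g(x', y⁺) − G(x') ≤ (1 − λμ/ρ_u) (g(x', y) − G(x')) − (1/(2λρ_u) − L_g/2) ‖y⁺ − y‖² + (λ L_g²/ρ_l) ‖x' − x‖² + (λ/ρ_l) ‖∇_y g(x, y) − v‖². -/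

import Mathlib

open scoped RealInnerProductSpace

private lemma aux_cs {p : ℕ} (B : EuclideanSpace ℝ (Fin p) →L[ℝ] EuclideanSpace ℝ (Fin p))
    (hBsymm : ∀ v w, ⟪B v, w⟫ = ⟪v, B w⟫)
    (hpos : ∀ v, 0 ≤ ⟪B v, v⟫) (z w : EuclideanSpace ℝ (Fin p)) :
    ⟪B z, w⟫ ^ 2 ≤ ⟪B z, z⟫ * ⟪B w, w⟫ := by
  have h : ∀ t : ℝ, 0 ≤ ⟪B w, w⟫ * (t * t) + (2 * ⟪B z, w⟫) * t + ⟪B z, z⟫ := by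
    intro t
    have h0 := hpos (z + t • w)
    have hsym : ⟪B w, z⟫ = ⟪B z, w⟫ := by rw [hBsymm]; exact real_inner_comm _ _
    have hexp : ⟪B (z + t • w), z + t • w⟫
        = ⟪B z, z⟫ + t * ⟪B z, w⟫ + t * ⟪B w, z⟫ + (t * t) * ⟪B w, w⟫ := by
      simp only [map_add, map_smul, inner_add_left, inner_add_right,
        real_inner_smul_left, real_inner_smul_right]
      ring
    rw [hexp, hsym] at h0
    linarith
  have hd := discrim_le_zero h
  rw [discrim] at hd
  nlinarith [hd]

private lemma aux_upper {p : ℕ} (ρu : ℝ) (hρu : 0 < ρu)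
    (B : EuclideanSpace ℝ (Fin p) →L[ℝ] EuclideanSpace ℝ (Fin p))
    (hBsymm : ∀ v w, ⟪B v, w⟫ = ⟪v, B w⟫)
    (hpos : ∀ v, 0 ≤ ⟪B v, v⟫)
    (hBu : ∀ v, ⟪B v, v⟫ ≤ ρu * ‖v‖ ^ 2) (z : EuclideanSpace ℝ (Fin p)) :
    ‖B z‖ ^ 2 ≤ ρu * ⟪B z, z⟫ := by
  rcases eq_or_ne (B z) 0 with h | h
  · simp [h]
  · have hcs := aux_cs B hBsymm hpos z (B z)
    have h1 : ⟪B z, B z⟫ = ‖B z‖ ^ 2 := real_inner_self_eq_norm_sq _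
    have h2 := hBu (B z)
    have h3 : 0 < ‖B z‖ ^ 2 := pow_pos (norm_pos_iff.mpr h) 2
    nlinarith [hpos z]

private lemma aux_lower {p : ℕ} (ρl : ℝ) (hρl : 0 < ρl)
    (B : EuclideanSpace ℝ (Fin p) →L[ℝ] EuclideanSpace ℝ (Fin p))
    (hBl : ∀ v, ρl * ‖v‖ ^ 2 ≤ ⟪B v, v⟫) (z : EuclideanSpace ℝ (Fin p)) :
    ρl * ⟪B z, z⟫ ≤ ‖B z‖ ^ 2 := by
  have h1 := hBl z
  have h2 : ⟪B z, z⟫ ≤ ‖B z‖ * ‖z‖ := real_inner_le_norm _ _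
  have h5 : ρl * ‖z‖ ≤ ‖B z‖ := by
    rcases eq_or_ne z 0 with rfl | hz
    · simp
    · have hz' : 0 < ‖z‖ := norm_pos_iff.mpr hz
      have h6 : ρl * ‖z‖ * ‖z‖ ≤ ‖B z‖ * ‖z‖ := by nlinarith
      exact le_of_mul_le_mul_right h6 hz'
  nlinarith [mul_le_mul_of_nonneg_left h2 hρl.le,
    mul_le_mul_of_nonneg_left h5 (norm_nonneg (B z))]

private lemma descent_lemma {n : ℕ} (L : ℝ) (f : EuclideanSpace ℝ (Fin n) → ℝ)
    (f' : EuclideanSpace ℝ (Fin n) → EuclideanSpace ℝ (Fin n))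
    (hf : ∀ z, HasGradientAt f (f' z) z)
    (hlip : ∀ z₁ z₂, ‖f' z₁ - f' z₂‖ ≤ L * ‖z₁ - z₂‖)
    (a b : EuclideanSpace ℝ (Fin n)) :
    f b ≤ f a + ⟪f' a, b - a⟫ + L / 2 * ‖b - a‖ ^ 2 := by
  set δ := b - a with hδ
  have hγ : ∀ t : ℝ, HasDerivAt (fun s : ℝ => a + s • δ) δ t := by
    intro t
    simpa using ((hasDerivAt_id t).smul_const δ).const_add a
  have hφ : ∀ t : ℝ, HasDerivAt (fun s : ℝ => f (a + s • δ)) ⟪f' (a + t • δ), δ⟫ t := by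
    intro t
    have h1 := (hf (a + t • δ)).hasFDerivAt.comp_hasDerivAt t (hγ t)
    simp at h1
    exact h1
  set ψ : ℝ → ℝ := fun t => f (a + t • δ) - t * ⟪f' a, δ⟫ - t ^ 2 * (L / 2 * ‖δ‖ ^ 2)
    with hψdef
  have hψ : ∀ t : ℝ, HasDerivAt ψ
      (⟪f' (a + t • δ), δ⟫ - ⟪f' a, δ⟫ - 2 * t * (L / 2 * ‖δ‖ ^ 2)) t := by
    intro t
    have h2 : HasDerivAt (fun s : ℝ => s * ⟪f' a, δ⟫) ⟪f' a, δ⟫ t := by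
      simpa using (hasDerivAt_id t).mul_const ⟪f' a, δ⟫
    have h3 : HasDerivAt (fun s : ℝ => s ^ 2 * (L / 2 * ‖δ‖ ^ 2))
        (2 * t * (L / 2 * ‖δ‖ ^ 2)) t := by
      have := (hasDerivAt_pow 2 t).mul_const (L / 2 * ‖δ‖ ^ 2)
      simpa [mul_comm] using this
    exact ((hφ t).sub h2).sub h3
  have key : ψ 1 ≤ ψ 0 := by
    have hA : AntitoneOn ψ (Set.Icc (0 : ℝ) 1) := by
      apply antitoneOn_of_deriv_nonpos (convex_Icc 0 1)
      · exact fun t _ => (hψ t).continuousAt.continuousWithinAt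
      · exact fun t _ => (hψ t).differentiableAt.differentiableWithinAt
      · intro t ht
        rw [interior_Icc] at ht
        rw [(hψ t).deriv]
        have ht0 : 0 < t := ht.1
        have hcs : ⟪f' (a + t • δ) - f' a, δ⟫ ≤ ‖f' (a + t • δ) - f' a‖ * ‖δ‖ :=
          real_inner_le_norm _ _
        have hl : ‖f' (a + t • δ) - f' a‖ ≤ L * (t * ‖δ‖) := by
          have h4 := hlip (a + t • δ) a
          simpa [norm_smul, abs_of_pos ht0, mul_assoc] using h4
        rw [inner_sub_left] at hcs
        nlinarith [mul_le_mul_of_nonneg_right hl (norm_nonneg δ), norm_nonneg δ]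
    exact hA (Set.left_mem_Icc.mpr zero_le_one) (Set.right_mem_Icc.mpr zero_le_one)
      zero_le_one
  have hb : a + δ = b := by rw [hδ]; abel
  have h0 : ψ 0 = f a := by simp [hψdef]
  have h1 : ψ 1 = f b - ⟪f' a, δ⟫ - L / 2 * ‖δ‖ ^ 2 := by
    simp [hψdef, hb]
  rw [h0, h1] at key
  linarith

set_option maxHeartbeats 1000000 in
/-- One step of the adaptive mirror descent on the lower-level variable:
with `g(x',·)` attaining its infimum `G(x')` and satisfying the `μ`-PL condition, `∇_y g`
`L_g`-Lipschitz in each variable, `B` symmetric with `ρ_l I ⪯ B ⪯ ρ_u I` (`ρ_l ρ_u ≥ 1`),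
and `y⁺ = y − λ B⁻¹ v` (encoded as `B (y − y⁺) = λ v`), one has the stated descent
inequality for the lower-level residual. -/
theorem stmt_10 {d p : ℕ} (μ Lg ρl ρu lam : ℝ)
    (hμ : 0 < μ) (hlam : 0 < lam) (hρl : 0 < ρl) (hρu : 0 < ρu) (hρlu : 1 ≤ ρl * ρu)
    (g : EuclideanSpace ℝ (Fin d) → EuclideanSpace ℝ (Fin p) → ℝ)
    (gy : EuclideanSpace ℝ (Fin d) → EuclideanSpace ℝ (Fin p) → EuclideanSpace ℝ (Fin p))
    (hgy : ∀ x y, HasGradientAt (fun y' => g x y') (gy x y) y)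
    (hlipy : ∀ x y₁ y₂, ‖gy x y₁ - gy x y₂‖ ≤ Lg * ‖y₁ - y₂‖)
    (hlipx : ∀ x₁ x₂ y, ‖gy x₁ y - gy x₂ y‖ ≤ Lg * ‖x₁ - x₂‖)
    (G : EuclideanSpace ℝ (Fin d) → ℝ)
    (hGlow : ∀ x y, G x ≤ g x y) (hGatt : ∀ x, ∃ y, g x y = G x)
    (hPL : ∀ x y, ‖gy x y‖ ^ 2 ≥ 2 * μ * (g x y - G x))
    (B : EuclideanSpace ℝ (Fin p) →L[ℝ] EuclideanSpace ℝ (Fin p))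
    (hBsymm : ∀ v w, ⟪B v, w⟫ = ⟪v, B w⟫)
    (hBl : ∀ v, ρl * ‖v‖ ^ 2 ≤ ⟪B v, v⟫) (hBu : ∀ v, ⟪B v, v⟫ ≤ ρu * ‖v‖ ^ 2)
    (v y yp : EuclideanSpace ℝ (Fin p)) (x x' : EuclideanSpace ℝ (Fin d))
    (hupd : B (y - yp) = lam • v) :
    g x' yp - G x' ≤ (1 - lam * μ / ρu) * (g x' y - G x')
      - (1 / (2 * lam * ρu) - Lg / 2) * ‖yp - y‖ ^ 2
      + (lam * Lg ^ 2 / ρl) * ‖x' - x‖ ^ 2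
      + (lam / ρl) * ‖gy x y - v‖ ^ 2 := by
  have hpos : ∀ z, (0:ℝ) ≤ ⟪B z, z⟫ := fun z => le_trans (by positivity) (hBl z)
  -- `B` is bijective
  have hinj : Function.Injective B := by
    intro a b hab
    have h1 : ρl * ‖a - b‖ ^ 2 ≤ 0 := by
      have h0 := hBl (a - b)
      rw [map_sub, hab, sub_self] at h0
      simpa using h0
    have h3 : ‖a - b‖ = 0 := by nlinarith [norm_nonneg (a - b), sq_nonneg ‖a - b‖]
    exact sub_eq_zero.mp (norm_eq_zero.mp h3)
  have hsurj : Function.Surjective B := LinearMap.injective_iff_surjective.mp hinj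
  obtain ⟨z, hz⟩ := hsurj (gy x' y)
  set zw := z - lam⁻¹ • (y - yp) with hzwdef
  have hBzw : B zw = gy x' y - v := by
    rw [hzwdef, map_sub, map_smul, hupd, hz, smul_smul, inv_mul_cancel₀ hlam.ne',
      one_smul]
  have hlamz : lam • z = lam • zw + (y - yp) := by
    rw [hzwdef, smul_sub, smul_smul, mul_inv_cancel₀ hlam.ne', one_smul]
    abel
  -- quadratic-form facts
  have f1 : ‖gy x' y‖ ^ 2 ≤ ρu * ⟪B z, z⟫ := by
    conv_lhs => rw [← hz]
    exact aux_upper ρu hρu B hBsymm hpos hBu z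
  have f3 : ρl * ⟪B zw, zw⟫ ≤ ‖gy x' y - v‖ ^ 2 := by
    conv_rhs => rw [← hBzw]
    exact aux_lower ρl hρl B hBl zw
  have f4 : ρl * ‖y - yp‖ ^ 2 ≤ ⟪B (y - yp), y - yp⟫ := hBl (y - yp)
  -- the expansion identity
  have f2 : lam ^ 2 * ⟪B z, z⟫
      = lam ^ 2 * ⟪B zw, zw⟫ + 2 * lam * ⟪gy x' y - v, y - yp⟫
        + ⟪B (y - yp), y - yp⟫ := by
    have e1 : ⟪B (lam • z), lam • z⟫ = lam ^ 2 * ⟪B z, z⟫ := by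
      rw [map_smul, real_inner_smul_left, real_inner_smul_right]; ring
    have hsym2 : ⟪B (y - yp), zw⟫ = ⟪gy x' y - v, y - yp⟫ := by
      rw [hBsymm, hBzw]; exact real_inner_comm _ _
    have e2 : ⟪B (lam • zw + (y - yp)), lam • zw + (y - yp)⟫
        = lam ^ 2 * ⟪B zw, zw⟫ + 2 * lam * ⟪gy x' y - v, y - yp⟫
          + ⟪B (y - yp), y - yp⟫ := by
      simp only [map_add, map_smul, inner_add_left, inner_add_right,
        real_inner_smul_left, real_inner_smul_right, hBzw, hsym2]
      ring
    rw [← e1, hlamz, e2]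
  have huδ : lam * ⟪gy x' y, y - yp⟫
      = lam * ⟪gy x' y - v, y - yp⟫ + ⟪B (y - yp), y - yp⟫ := by
    have h7 : ⟪B (y - yp), y - yp⟫ = lam * ⟪v, y - yp⟫ := by
      rw [hupd, real_inner_smul_left]
    rw [h7, inner_sub_left]
    ring
  -- key one-step inequality
  have hc : (0:ℝ) < 2 * lam * ρl * ρu := by positivity
  have Mpoly : (2 * lam * ρl * ρu) * (-⟪gy x' y, y - yp⟫)
      ≤ (2 * lam * ρl * ρu) * (-(lam / (2 * ρu)) * ‖gy x' y‖ ^ 2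
          - (1 / (2 * lam * ρu)) * ‖y - yp‖ ^ 2
          + (lam / (2 * ρl)) * ‖gy x' y - v‖ ^ 2) := by
    have hR : (2 * lam * ρl * ρu) * (-(lam / (2 * ρu)) * ‖gy x' y‖ ^ 2
          - (1 / (2 * lam * ρu)) * ‖y - yp‖ ^ 2
          + (lam / (2 * ρl)) * ‖gy x' y - v‖ ^ 2)
        = -(lam ^ 2 * ρl) * ‖gy x' y‖ ^ 2 - ρl * ‖y - yp‖ ^ 2
          + lam ^ 2 * ρu * ‖gy x' y - v‖ ^ 2 := by
      field_simp
    rw [hR]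
    have p1 : lam ^ 2 * ρl * ‖gy x' y‖ ^ 2 ≤ lam ^ 2 * ρl * (ρu * ⟪B z, z⟫) :=
      mul_le_mul_of_nonneg_left f1 (by positivity)
    have p3 : lam ^ 2 * ρu * (ρl * ⟪B zw, zw⟫) ≤ lam ^ 2 * ρu * ‖gy x' y - v‖ ^ 2 :=
      mul_le_mul_of_nonneg_left f3 (by positivity)
    have p4 : ρl * ρu * (ρl * ‖y - yp‖ ^ 2) ≤ ρl * ρu * ⟪B (y - yp), y - yp⟫ :=
      mul_le_mul_of_nonneg_left f4 (by positivity)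
    have p5 : ρl * ‖y - yp‖ ^ 2 ≤ ρl * ρu * (ρl * ‖y - yp‖ ^ 2) := by
      have hn : (0:ℝ) ≤ ρl * ‖y - yp‖ ^ 2 := by positivity
      nlinarith [mul_le_mul_of_nonneg_right hρlu hn]
    have q1 : (2 * ρl * ρu) * (lam * ⟪gy x' y, y - yp⟫)
        = (2 * ρl * ρu) * (lam * ⟪gy x' y - v, y - yp⟫ + ⟪B (y - yp), y - yp⟫) := by
      rw [huδ]
    have q2 : ρl * ρu * (lam ^ 2 * ⟪B z, z⟫)
        = ρl * ρu * (lam ^ 2 * ⟪B zw, zw⟫ + 2 * lam * ⟪gy x' y - v, y - yp⟫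
            + ⟪B (y - yp), y - yp⟫) := by
      rw [f2]
    linarith [p1, p3, p4, p5, q1, q2]
  have hK : -⟪gy x' y, y - yp⟫ ≤ -(lam / (2 * ρu)) * ‖gy x' y‖ ^ 2
      - (1 / (2 * lam * ρu)) * ‖y - yp‖ ^ 2
      + (lam / (2 * ρl)) * ‖gy x' y - v‖ ^ 2 :=
    le_of_mul_le_mul_left Mpoly hc
  -- descent lemma
  have hS1 : g x' yp ≤ g x' y + ⟪gy x' y, yp - y⟫ + Lg / 2 * ‖yp - y‖ ^ 2 :=
    descent_lemma Lg (fun y' => g x' y') (gy x') (hgy x') (hlipy x') y yp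
  have hyp2 : yp - y = -(y - yp) := by abel
  have hS1' : g x' yp ≤ g x' y - ⟪gy x' y, y - yp⟫ + Lg / 2 * ‖y - yp‖ ^ 2 := by
    rw [hyp2, inner_neg_right, norm_neg] at hS1
    linarith
  -- PL inequality
  have hS3 : lam * μ / ρu * (g x' y - G x') ≤ lam / (2 * ρu) * ‖gy x' y‖ ^ 2 := by
    have h9 := hPL x' y
    have h10 : lam / (2 * ρu) * (2 * μ * (g x' y - G x'))
        ≤ lam / (2 * ρu) * ‖gy x' y‖ ^ 2 :=
      mul_le_mul_of_nonneg_left h9 (by positivity)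
    have h11 : lam / (2 * ρu) * (2 * μ * (g x' y - G x'))
        = lam * μ / ρu * (g x' y - G x') := by
      field_simp
    linarith
  -- bound on the error term
  have hS4 : lam / (2 * ρl) * ‖gy x' y - v‖ ^ 2
      ≤ lam * Lg ^ 2 / ρl * ‖x' - x‖ ^ 2 + lam / ρl * ‖gy x y - v‖ ^ 2 := by
    have h12 : ‖gy x' y - v‖ ≤ Lg * ‖x' - x‖ + ‖gy x y - v‖ := by
      have h13 : gy x' y - v = (gy x' y - gy x y) + (gy x y - v) := by abel
      calc ‖gy x' y - v‖ = ‖(gy x' y - gy x y) + (gy x y - v)‖ := by rw [h13]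
        _ ≤ ‖gy x' y - gy x y‖ + ‖gy x y - v‖ := norm_add_le _ _
        _ ≤ Lg * ‖x' - x‖ + ‖gy x y - v‖ := by linarith [hlipx x' x y]
    have h14 : ‖gy x' y - v‖ ^ 2 ≤ (Lg * ‖x' - x‖ + ‖gy x y - v‖) ^ 2 := by
      nlinarith [norm_nonneg (gy x' y - v)]
    have h15 : ‖gy x' y - v‖ ^ 2 ≤ 2 * Lg ^ 2 * ‖x' - x‖ ^ 2 + 2 * ‖gy x y - v‖ ^ 2 := by
      nlinarith [sq_nonneg (Lg * ‖x' - x‖ - ‖gy x y - v‖)]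
    have h16 : lam / (2 * ρl) * ‖gy x' y - v‖ ^ 2
        ≤ lam / (2 * ρl) * (2 * Lg ^ 2 * ‖x' - x‖ ^ 2 + 2 * ‖gy x y - v‖ ^ 2) :=
      mul_le_mul_of_nonneg_left h15 (by positivity)
    have h17 : lam / (2 * ρl) * (2 * Lg ^ 2 * ‖x' - x‖ ^ 2 + 2 * ‖gy x y - v‖ ^ 2)
        = lam * Lg ^ 2 / ρl * ‖x' - x‖ ^ 2 + lam / ρl * ‖gy x y - v‖ ^ 2 := by
      field_simp
    linarith
  have hnδ : ‖yp - y‖ = ‖y - yp‖ := norm_sub_rev _ _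
  rw [hnδ]
  linarith [hS1', hK, hS3, hS4]
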